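/- There is an absolute constant C such that for every udpda A of size m, the language L(A) is accepted by a deterministic finite automaton with at most 2^{C·m} states. -/

import Mathlib

/-- The data of a unary pushdown automaton over the input alphabet `{a}`
(a transition whose `Bool` component is `true` reads `a`, otherwise it
reads `ε`): bottom-of-stack symbol, initial state, final states, transitions. -/
structure PrePDA (Q Γ : Type) where
  bot : Γ
  init : Q
  final : Set Q
  δ : Set (Q × Bool × Γ × Q × List Γ)

namespace PrePDA

variable {Q Γ : Type}

/-- Valid stack contents: a word in `(Γ∖{⊥})*⊥`. -/
def IsStack (A : PrePDA Q Γ) (s : List Γ) : Prop :=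
  ∃ s', A.bot ∉ s' ∧ s = s' ++ [A.bot]

/-- A move from configuration `c1` to `c2` reading `a` (if `σ = true`)
or `ε` (if `σ = false`). -/
def Move (A : PrePDA Q Γ) (c1 : Q × List Γ) (σ : Bool) (c2 : Q × List Γ) : Prop :=
  ∃ γ w, (c1.1, σ, γ, c2.1, w) ∈ A.δ ∧
    (((γ ≠ A.bot ∨ w ≠ []) ∧ ∃ s', c1.2 = γ :: s' ∧ c2.2 = w ++ s') ∨
      (γ = A.bot ∧ w = [] ∧ c1.2 = [A.bot] ∧ c2.2 = [A.bot]))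

/-- `Steps A c1 k c2`: there is a finite computation from `c1` to `c2`
reading the word `a^k`. -/
inductive Steps (A : PrePDA Q Γ) : Q × List Γ → ℕ → Q × List Γ → Prop
  | refl (c : Q × List Γ) : Steps A c 0 c
  | tail {c1 : Q × List Γ} {k : ℕ} {c2 : Q × List Γ} {σ : Bool} {c3 : Q × List Γ} :
      Steps A c1 k c2 → A.Move c2 σ c3 → Steps A c1 (k + (if σ then 1 else 0)) c3

/-- The language of the automaton, as a set of natural numbers:
`a^k` is accepted iff `k` is in this set (acceptance by final state,
starting from the configuration `(q₀, ⊥)`). -/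
def lang (A : PrePDA Q Γ) : Set ℕ :=
  {k | ∃ c : Q × List Γ, A.Steps (A.init, [A.bot]) k c ∧ c.1 ∈ A.final}

end PrePDA

/-- A unary deterministic pushdown automaton (udpda): finitely many states and
stack symbols, well-formed transitions (each pushed word has length at most 2,
and the bottom symbol is neither pushed above other symbols nor removed), and
at most one move available at every configuration. -/
structure UDPDA (Q Γ : Type) extends PrePDA Q Γ where
  finQ : Finite Q
  finΓ : Finite Γ
  wf : ∀ q1 σ γ q2 w, (q1, σ, γ, q2, w) ∈ δ →
    w.length ≤ 2 ∧
      ((γ ≠ bot ∧ bot ∉ w) ∨ (γ = bot ∧ (w = [] ∨ ∃ w', bot ∉ w' ∧ w = w' ++ [bot])))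
  det : ∀ c σ1 c1 σ2 c2, toPrePDA.IsStack c.2 →
    toPrePDA.Move c σ1 c1 → toPrePDA.Move c σ2 c2 → σ1 = σ2 ∧ c1 = c2

namespace UDPDA

variable {Q Γ : Type}

/-- The size of a udpda: `|Q| · |Γ|`. -/
noncomputable def size (A : UDPDA Q Γ) : ℕ := Nat.card Q * Nat.card Γ

/-- The language of a udpda. -/
def lang (A : UDPDA Q Γ) : Set ℕ := A.toPrePDA.lang

end UDPDA


namespace UPDAProof

section Periodic

variable (L : Set ℕ) (N p : ℕ)

private def pf : ℕ → ℕ := fun s => if s + 1 < N + p then s + 1 else N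

variable {N p}

private lemma pf_lt (hp : 1 ≤ p) (s : ℕ) : pf N p s < N + p := by
  unfold pf; split <;> omega

private lemma pf_iter_lt (hp : 1 ≤ p) (n : ℕ) (s : ℕ) (hs : s < N + p) :
    (pf N p)^[n] s < N + p := by
  induction n generalizing s with
  | zero => simpa
  | succ n ih =>
    rw [Function.iterate_succ_apply]
    exact ih _ (pf_lt hp _)

private lemma pf_iter_eq (n : ℕ) (s : ℕ) (h : s + n < N + p) :
    (pf N p)^[n] s = s + n := by
  induction n generalizing s with
  | zero => simp
  | succ n ih =>
    rw [Function.iterate_succ_apply]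
    have h1 : pf N p s = s + 1 := by unfold pf; split <;> omega
    rw [h1, ih _ (by omega)]
    omega

private lemma pf_iter_ge (hp : 1 ≤ p) (n : ℕ) (s : ℕ) (hs : N ≤ s) :
    N ≤ (pf N p)^[n] s := by
  induction n generalizing s with
  | zero => simpa
  | succ n ih =>
    rw [Function.iterate_succ_apply]
    refine ih _ ?_
    unfold pf; split <;> omega

private lemma pf_iter_p (hp : 1 ≤ p) (s : ℕ) (h1 : N ≤ s) (h2 : s < N + p) :
    (pf N p)^[p] s = s := by
  have key := Function.iterate_add_apply (pf N p) (s - N) (N + p - s) s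
  rw [show s - N + (N + p - s) = p by omega] at key
  have h3 : (pf N p)^[N + p - s] s = N := by
    have key2 := Function.iterate_add_apply (pf N p) 1 (N + p - s - 1) s
    rw [show 1 + (N + p - s - 1) = N + p - s by omega] at key2
    have h4 : (pf N p)^[N + p - s - 1] s = N + p - 1 := by
      rw [pf_iter_eq _ _ (by omega)]; omega
    rw [key2, h4]
    simp only [Function.iterate_one]
    unfold pf; split <;> omega
  rw [key, h3, pf_iter_eq _ _ (by omega)]
  omega

private lemma pf_iter_mem (hp : 1 ≤ p)
    (hper : ∀ n, N ≤ n → (n ∈ L ↔ n + p ∈ L)) (n : ℕ) :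
    ((pf N p)^[n] 0 ∈ L ↔ n ∈ L) := by
  induction n using Nat.strong_induction_on with
  | _ n ih =>
    by_cases h : n < N + p
    · rw [pf_iter_eq n 0 (by omega), Nat.zero_add]
    · push_neg at h
      have hge : N ≤ (pf N p)^[n - p] 0 := by
        have key := Function.iterate_add_apply (pf N p) (n - p - N) N 0
        rw [show n - p - N + N = n - p by omega] at key
        rw [key, pf_iter_eq N 0 (by omega)]
        exact pf_iter_ge hp _ _ (by omega)
      have h1 : (pf N p)^[n] 0 = (pf N p)^[n - p] 0 := by
        have key := Function.iterate_add_apply (pf N p) p (n - p) 0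
        rw [show p + (n - p) = n by omega] at key
        rw [key]
        exact pf_iter_p hp _ hge (pf_iter_lt hp _ _ (by omega))
      rw [h1, ih (n - p) (by omega)]
      have h3 := hper (n - p) (by omega)
      have h2 : n - p + p = n := by omega
      rw [h2] at h3
      exact h3

theorem dfa_of_periodic (hp : 1 ≤ p)
    (hper : ∀ n, N ≤ n → (n ∈ L ↔ n + p ∈ L)) :
    ∃ (M : DFA Unit (Fin (N + p))),
      ∀ n : ℕ, List.replicate n () ∈ M.accepts ↔ n ∈ L := by
  have hpos : 0 < N + p := by omega
  let fS : Fin (N + p) → Fin (N + p) := fun s => ⟨pf N p s, pf_lt hp _⟩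
  let M : DFA Unit (Fin (N + p)) :=
    { step := fun s _ => fS s
      start := ⟨0, hpos⟩
      accept := {s | (s : ℕ) ∈ L} }
  have hcoe : ∀ n (s : Fin (N + p)), ((fS^[n] s : Fin (N + p)) : ℕ) = (pf N p)^[n] (s : ℕ) := by
    intro n
    induction n with
    | zero => intro s; simp
    | succ n ih =>
      intro s
      rw [Function.iterate_succ_apply, Function.iterate_succ_apply]
      exact ih (fS s)
  have heval : ∀ n (s : Fin (N + p)), M.evalFrom s (List.replicate n ()) = fS^[n] s := by
    intro n
    induction n with
    | zero => intro s; rfl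
    | succ n ih =>
      intro s
      rw [List.replicate_succ]
      show M.evalFrom (M.step s ()) (List.replicate n ()) = _
      rw [ih (M.step s ()), Function.iterate_succ_apply]
  refine ⟨M, fun n => ?_⟩
  rw [DFA.mem_accepts]
  show M.evalFrom M.start _ ∈ M.accept ↔ _
  rw [heval n M.start]
  show ((fS^[n] M.start : Fin (N + p)) : ℕ) ∈ L ↔ _
  have h5 : ((fS^[n] M.start : Fin (N + p)) : ℕ) = (pf N p)^[n] 0 := hcoe n M.start
  rw [h5]
  exact pf_iter_mem L hp hper n

end Periodic

end UPDAProof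
namespace UPDAProof

section Automaton

variable {Q Γ : Type} (A : UDPDA Q Γ)

open Classical in
/-- The deterministic one-step function. -/
noncomputable def step? (c : Q × List Γ) : Option (Bool × (Q × List Γ)) :=
  if h : ∃ σ c', A.toPrePDA.Move c σ c' then
    some (h.choose, h.choose_spec.choose)
  else none

variable {A}

lemma step?_move {c : Q × List Γ} {σ : Bool} {c' : Q × List Γ}
    (h : step? A c = some (σ, c')) : A.toPrePDA.Move c σ c' := by
  unfold step? at h
  split at h
  · rename_i hex
    rw [Option.some_inj, Prod.mk.injEq] at h
    obtain ⟨h1, h2⟩ := h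
    rw [← h1, ← h2]
    exact hex.choose_spec.choose_spec
  · cases h

lemma move_step? {c : Q × List Γ} {σ : Bool} {c' : Q × List Γ}
    (hst : A.toPrePDA.IsStack c.2) (h : A.toPrePDA.Move c σ c') :
    step? A c = some (σ, c') := by
  have hex : ∃ σ c', A.toPrePDA.Move c σ c' := ⟨σ, c', h⟩
  unfold step?
  rw [dif_pos hex, Option.some_inj, Prod.mk.injEq]
  exact A.det c _ _ _ _ hst hex.choose_spec.choose_spec h

/-- Basic facts about valid stacks. -/
lemma isStack_ne_nil {s : List Γ} (h : A.toPrePDA.IsStack s) : s ≠ [] := by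
  obtain ⟨s', -, rfl⟩ := h
  simp

lemma isStack_cons_elim {γ : Γ} {s : List Γ} (h : A.toPrePDA.IsStack (γ :: s)) :
    (γ = A.bot ∧ s = []) ∨ (γ ≠ A.bot ∧ A.toPrePDA.IsStack s ∧ s ≠ []) := by
  obtain ⟨s', hnb, he⟩ := h
  cases s' with
  | nil =>
    simp at he
    exact Or.inl ⟨he.1, he.2⟩
  | cons x xs =>
    rw [List.cons_append] at he
    injection he with h1 h2
    simp at hnb
    refine Or.inr ⟨by rw [h1]; exact Ne.symm hnb.1, ⟨xs, hnb.2, h2⟩, ?_⟩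
    rw [h2]; simp

lemma isStack_bot : A.toPrePDA.IsStack [A.bot] := ⟨[], by simp, rfl⟩

/-- Stacks stay valid along moves. -/
lemma move_isStack {c c' : Q × List Γ} {σ : Bool}
    (hm : A.toPrePDA.Move c σ c') (hst : A.toPrePDA.IsStack c.2) :
    A.toPrePDA.IsStack c'.2 := by
  obtain ⟨γ, w, hδ, hbr⟩ := hm
  rcases hbr with ⟨hcond, s', he1, he2⟩ | ⟨-, -, -, he⟩
  · have hwf := (A.wf _ _ _ _ _ hδ).2
    rw [he1] at hst
    rcases isStack_cons_elim hst with ⟨hγ, hs⟩ | ⟨hγ, hs, -⟩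
    · -- γ = bot, s' = []
      rcases hwf with ⟨hne, -⟩ | ⟨-, hw⟩
      · exact absurd hγ hne
      · rcases hw with hw | ⟨w', hnb, hw⟩
        · rcases hcond with h | h
          · exact absurd hγ h
          · exact absurd hw h
        · rw [he2, hs, hw]
          exact ⟨w', hnb, by simp⟩
    · -- γ ≠ bot, s valid
      rcases hwf with ⟨-, hnbw⟩ | ⟨hγ', -⟩
      · obtain ⟨u, hnbu, hu⟩ := hs
        rw [he2, hu]
        refine ⟨w ++ u, ?_, by simp⟩
        simp only [List.mem_append]
        rintro (h | h)
        · exact hnbw h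
        · exact hnbu h
      · exact absurd hγ' hγ
  · rw [he]; exact isStack_bot

variable (A)

/-- The full trajectory of the automaton: time ↦ (number of `a`s read so far, configuration). -/
noncomputable def traj : ℕ → Option (ℕ × Q × List Γ)
  | 0 => some (0, A.init, [A.bot])
  | t + 1 => (traj t).bind fun x =>
      (step? A x.2).map fun y => (x.1 + (if y.1 then 1 else 0), y.2)

lemma traj_zero : traj A 0 = some (0, A.init, [A.bot]) := rfl

lemma traj_succ_eq (t : ℕ) : traj A (t + 1) = (traj A t).bind fun x =>
    (step? A x.2).map fun y => (x.1 + (if y.1 then 1 else 0), y.2) := rfl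

variable {A}

lemma traj_succ {t : ℕ} {n' : ℕ} {q' : Q} {s' : List Γ}
    (h : traj A (t + 1) = some (n', q', s')) :
    ∃ n q s σ, traj A t = some (n, q, s) ∧ step? A (q, s) = some (σ, (q', s')) ∧
      n' = n + (if σ then 1 else 0) := by
  rw [traj_succ_eq] at h
  cases htr : traj A t with
  | none => rw [htr] at h; simp at h
  | some x =>
    rw [htr] at h
    obtain ⟨n, q, s⟩ := x
    cases hst : step? A (q, s) with
    | none => simp [hst] at h
    | some y =>
      obtain ⟨σ, q2, s2⟩ := y
      simp only [hst, Option.map_some, Option.bind_some, Option.some_inj] at h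
      rw [Prod.mk.injEq, Prod.mk.injEq] at h
      obtain ⟨h1, h2, h3⟩ := h
      subst h2
      subst h3
      exact ⟨n, q, s, σ, rfl, hst, h1.symm⟩

lemma traj_step {t : ℕ} {n : ℕ} {q : Q} {s : List Γ} {σ : Bool} {c' : Q × List Γ}
    (h1 : traj A t = some (n, q, s)) (h2 : step? A (q, s) = some (σ, c')) :
    traj A (t + 1) = some (n + (if σ then 1 else 0), c'.1, c'.2) := by
  rw [traj_succ_eq, h1]
  simp [h2]

lemma traj_isStack : ∀ t n (q : Q) (s : List Γ), traj A t = some (n, q, s) →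
    A.toPrePDA.IsStack s := by
  intro t
  induction t with
  | zero =>
    intro n q s h
    rw [traj_zero, Option.some_inj, Prod.mk.injEq, Prod.mk.injEq] at h
    obtain ⟨-, -, h3⟩ := h
    rw [← h3]
    exact isStack_bot
  | succ t ih =>
    intro n q s h
    obtain ⟨n0, q0, s0, σ, h1, h2, -⟩ := traj_succ h
    exact move_isStack (step?_move h2) (ih _ _ _ h1)

lemma traj_defined_add {t d : ℕ} {x : ℕ × Q × List Γ}
    (hx : traj A (t + d) = some x) : ∃ y, traj A t = some y := by
  induction d generalizing x with
  | zero => exact ⟨x, hx⟩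
  | succ d ih =>
    obtain ⟨n, q, s⟩ := x
    obtain ⟨n0, q0, s0, σ, h1, -, -⟩ := traj_succ hx
    exact ih h1

lemma traj_mono {t d n n' : ℕ} {q q' : Q} {s s' : List Γ}
    (h1 : traj A t = some (n, q, s)) (h2 : traj A (t + d) = some (n', q', s')) :
    n ≤ n' ∧ n' ≤ n + d := by
  induction d generalizing n' q' s' with
  | zero =>
    rw [Nat.add_zero, h1, Option.some_inj, Prod.mk.injEq] at h2
    have := h2.1
    omega
  | succ d ih =>
    obtain ⟨n0, q0, s0, σ, ha, hb, hc⟩ := traj_succ h2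
    have := ih ha
    cases σ <;> simp at hc <;> omega

lemma traj_cnt_le {t n : ℕ} {q : Q} {s : List Γ}
    (h : traj A t = some (n, q, s)) : n ≤ t := by
  have := traj_mono (traj_zero A) (by rw [Nat.zero_add]; exact h)
  omega

lemma steps_traj {c0 : Q × List Γ} {k : ℕ} {c : Q × List Γ}
    (h : A.toPrePDA.Steps c0 k c) :
    ∀ t0 n0, traj A t0 = some (n0, c0.1, c0.2) →
      ∃ t, traj A t = some (n0 + k, c.1, c.2) := by
  induction h with
  | refl => intro t0 n0 h0; exact ⟨t0, by rw [Nat.add_zero]; exact h0⟩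
  | @tail k c2 σ c3 hs hm ih =>
    intro t0 n0 h0
    obtain ⟨t, ht⟩ := ih t0 n0 h0
    have hstk : A.toPrePDA.IsStack c2.2 := traj_isStack t _ _ _ ht
    have h2 : step? A (c2.1, c2.2) = some (σ, c3) := by
      rw [Prod.mk.eta]
      exact move_step? hstk hm
    have := traj_step ht h2
    refine ⟨t + 1, ?_⟩
    rw [← Nat.add_assoc]
    exact this

lemma traj_steps : ∀ t {n : ℕ} {q : Q} {s : List Γ}, traj A t = some (n, q, s) →
    A.toPrePDA.Steps (A.init, [A.bot]) n (q, s) := by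
  intro t
  induction t with
  | zero =>
    intro n q s h
    rw [traj_zero, Option.some_inj, Prod.mk.injEq, Prod.mk.injEq] at h
    obtain ⟨h1, h3, h4⟩ := h
    rw [← h1, ← h3, ← h4]
    exact PrePDA.Steps.refl _
  | succ t ih =>
    intro n q s h
    obtain ⟨n0, q0, s0, σ, h1, h2, h3⟩ := traj_succ h
    have := PrePDA.Steps.tail (ih h1) (step?_move h2)
    rw [h3]
    exact this

lemma mem_lang_iff {k : ℕ} : k ∈ A.lang ↔
    ∃ t n q s, traj A t = some (n, q, s) ∧ n = k ∧ q ∈ A.final := by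
  constructor
  · rintro ⟨c, hs, hf⟩
    obtain ⟨t, ht⟩ := steps_traj hs 0 0 (traj_zero A)
    rw [Nat.zero_add] at ht
    exact ⟨t, k, c.1, c.2, ht, rfl, hf⟩
  · rintro ⟨t, n, q, s, ht, rfl, hf⟩
    exact ⟨(q, s), traj_steps t ht, hf⟩

end Automaton

end UPDAProof
namespace UPDAProof

section Copy

variable {Q Γ : Type} {A : UDPDA Q Γ}

lemma move_cases {q : Q} {γ : Γ} {s : List Γ} {σ : Bool} {c' : Q × List Γ}
    (hm : A.toPrePDA.Move (q, γ :: s) σ c') (hs : s ≠ []) :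
    ∃ w, (q, σ, γ, c'.1, w) ∈ A.δ ∧ c'.2 = w ++ s ∧ (γ ≠ A.bot ∨ w ≠ []) := by
  obtain ⟨γ0, w, hδ, hbr⟩ := hm
  rcases hbr with ⟨hcond, s', he1, he2⟩ | ⟨-, -, he1, -⟩
  · simp only at he1
    injection he1 with hγ hs'
    subst hγ
    subst hs'
    exact ⟨w, hδ, he2, hcond⟩
  · simp only at he1
    injection he1 with hh hs'
    exact absurd hs' hs

lemma move_of_trans {q : Q} {σ : Bool} {γ : Γ} {q2 : Q} {w s : List Γ}
    (hδ : (q, σ, γ, q2, w) ∈ A.δ) (hcond : γ ≠ A.bot ∨ w ≠ []) :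
    A.toPrePDA.Move (q, γ :: s) σ (q2, w ++ s) :=
  ⟨γ, w, hδ, Or.inl ⟨hcond, s, rfl, rfl⟩⟩

lemma eq_singleton_of_append {γ : Γ} {u s : List Γ} (hu : u ≠ [])
    (h : u ++ s = γ :: s) : u = [γ] := by
  cases u with
  | nil => exact absurd rfl hu
  | cons a u' =>
    rw [List.cons_append] at h
    injection h with h1 h2
    have : u'.length + s.length = s.length := by
      have := congrArg List.length h2
      simpa using this
    have : u' = [] := List.eq_nil_of_length_eq_zero (by omega)
    rw [h1, this]

/-- Copying a run segment above a common stack suffix from time `t₁` to time `t₂`. -/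
lemma copy {t₁ t₂ n₁ n₂ : ℕ} {q : Q} {γ : Γ} {s₁ s₂ : List Γ}
    (hs₁ : s₁ ≠ []) (hs₂ : s₂ ≠ [])
    (h₁ : traj A t₁ = some (n₁, q, γ :: s₁)) (h₂ : traj A t₂ = some (n₂, q, γ :: s₂)) :
    ∀ d, (∀ e ≤ d, ∀ n' q'' s'', traj A (t₁ + e) = some (n', q'', s'') →
        ∃ v, v ≠ [] ∧ s'' = v ++ s₁) →
      ∀ {m : ℕ} {q' : Q} {u : List Γ}, traj A (t₁ + d) = some (m, q', u ++ s₁) → u ≠ [] →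
        n₁ ≤ m ∧ traj A (t₂ + d) = some (m - n₁ + n₂, q', u ++ s₂) := by
  intro d
  induction d with
  | zero =>
    intro hyp m q' u hm hu
    rw [Nat.add_zero, h₁, Option.some_inj, Prod.mk.injEq, Prod.mk.injEq] at hm
    obtain ⟨e1, e2, e3⟩ := hm
    have hu1 : u = [γ] := eq_singleton_of_append hu e3.symm
    subst e1
    subst e2
    refine ⟨le_refl _, ?_⟩
    rw [Nat.add_zero, hu1, Nat.sub_self, Nat.zero_add]
    exact h₂
  | succ d ih =>
    intro hyp m q' u hm hu
    have hyp' : ∀ e ≤ d, ∀ n' q'' s'', traj A (t₁ + e) = some (n', q'', s'') →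
        ∃ v, v ≠ [] ∧ s'' = v ++ s₁ := fun e he => hyp e (by omega)
    obtain ⟨n0, q0, s0, σ, ha, hb, hc⟩ := traj_succ hm
    obtain ⟨v, hv, rfl⟩ := hyp' d (le_refl d) _ _ _ ha
    obtain ⟨hle, ht2d⟩ := ih hyp' ha hv
    -- analyze the move
    cases v with
    | nil => exact absurd rfl hv
    | cons γ' v₀ =>
      have hmv : A.toPrePDA.Move (q0, γ' :: (v₀ ++ s₁)) σ (q', u ++ s₁) := by
        have := step?_move hb
        rwa [List.cons_append] at this
      have hne : v₀ ++ s₁ ≠ [] := by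
        intro hcontra
        exact hs₁ (List.append_eq_nil_iff.mp hcontra).2
      obtain ⟨w, hδ, hw, hcond⟩ := move_cases hmv hne
      simp only at hw
      have huw : u = w ++ v₀ := by
        apply List.append_cancel_right (bs := s₁)
        rw [hw, List.append_assoc]
      -- the corresponding move on the t₂ side
      have hmv2 : A.toPrePDA.Move (q0, (γ' :: v₀) ++ s₂) σ (q', u ++ s₂) := by
        have := move_of_trans (s := v₀ ++ s₂) hδ hcond
        rw [List.cons_append]
        rw [huw, List.append_assoc]
        exact this
      have hstk2 : A.toPrePDA.IsStack ((γ' :: v₀) ++ s₂) :=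
        traj_isStack (A := A) (t₂ + d) _ _ _ ht2d
      have hstep2 : step? A (q0, (γ' :: v₀) ++ s₂) = some (σ, (q', u ++ s₂)) :=
        move_step? hstk2 hmv2
      have := traj_step ht2d hstep2
      refine ⟨by omega, ?_⟩
      rw [show t₂ + (d + 1) = (t₂ + d) + 1 by omega, this]
      congr 2
      cases σ <;> simp at hc ⊢ <;> omega

/-- Copying from an identical configuration. -/
lemma copy_eq {t₁ t₂ n₁ n₂ : ℕ} {q : Q} {s : List Γ}
    (h₁ : traj A t₁ = some (n₁, q, s)) (h₂ : traj A t₂ = some (n₂, q, s)) :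
    ∀ d {m : ℕ} {q' : Q} {s' : List Γ}, traj A (t₁ + d) = some (m, q', s') →
      n₁ ≤ m ∧ traj A (t₂ + d) = some (m - n₁ + n₂, q', s') := by
  intro d
  induction d with
  | zero =>
    intro m q' s' hm
    rw [Nat.add_zero, h₁, Option.some_inj, Prod.mk.injEq, Prod.mk.injEq] at hm
    obtain ⟨e1, e2, e3⟩ := hm
    subst e1; subst e2; subst e3
    rw [Nat.add_zero, Nat.sub_self, Nat.zero_add]
    exact ⟨le_refl _, h₂⟩
  | succ d ih =>
    intro m q' s' hm
    obtain ⟨n0, q0, s0, σ, ha, hb, hc⟩ := traj_succ hm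
    obtain ⟨hle, ht2d⟩ := ih ha
    have := traj_step ht2d hb
    refine ⟨by omega, ?_⟩
    rw [show t₂ + (d + 1) = (t₂ + d) + 1 by omega, this]
    congr 2
    cases σ <;> simp at hc ⊢ <;> omega

end Copy

end UPDAProof
namespace UPDAProof

section Pop

variable {Q Γ : Type} {A : UDPDA Q Γ}

lemma traj_inj {t n n' : ℕ} {q q' : Q} {s s' : List Γ}
    (h : traj A t = some (n, q, s)) (h' : traj A t = some (n', q', s')) :
    n = n' ∧ q = q' ∧ s = s' := by
  rw [h, Option.some_inj, Prod.mk.injEq, Prod.mk.injEq] at h'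
  exact h'

variable (A)

/-- A pop computation from time `t` down to stack `r`, taking `L` steps:
strictly above `r` before time `t+L`, exactly `r` at time `t+L`. -/
def PopTo (t : ℕ) (r : List Γ) (L : ℕ) : Prop :=
  (∀ e < L, ∃ n q v, v ≠ [] ∧ traj A (t + e) = some (n, q, v ++ r)) ∧
  ∃ n q, traj A (t + L) = some (n, q, r)

/-- `PopOne A q γ L`: somewhere on the trajectory, from state `q` with `γ` on
top of the stack, the automaton peels `γ` off in exactly `L` steps. -/
def PopOne (q : Q) (γ : Γ) (L : ℕ) : Prop :=
  ∃ t n s, traj A t = some (n, q, γ :: s) ∧ PopTo A t s L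

variable {A}

lemma ne_append {v r : List Γ} (hv : v ≠ []) : v ++ r ≠ r := by
  intro h
  have := congrArg List.length h
  simp at this
  exact hv this

lemma popTo_unique {t : ℕ} {r : List Γ} {L L' : ℕ}
    (h : PopTo A t r L) (h' : PopTo A t r L') : L = L' := by
  by_contra hne
  rcases Nat.lt_or_ge L L' with hlt | hge
  · obtain ⟨n, q, v, hv, he⟩ := h'.1 L hlt
    obtain ⟨n', q', he'⟩ := h.2
    obtain ⟨-, -, h3⟩ := traj_inj he he'
    exact ne_append hv h3
  · have hlt : L' < L := by omega
    obtain ⟨n, q, v, hv, he⟩ := h.1 L' hlt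
    obtain ⟨n', q', he'⟩ := h'.2
    obtain ⟨-, -, h3⟩ := traj_inj he he'
    exact ne_append hv h3

lemma popTo_pos {t : ℕ} {s : List Γ} {γ : Γ} {n : ℕ} {q : Q} {L : ℕ}
    (ht : traj A t = some (n, q, γ :: s)) (h : PopTo A t s L) : 0 < L := by
  rcases Nat.eq_zero_or_pos L with h0 | h0
  · subst h0
    obtain ⟨n', q', he'⟩ := h.2
    rw [Nat.add_zero] at he'
    obtain ⟨-, -, h3⟩ := traj_inj ht he'
    exact absurd (show ([γ] : List Γ) ++ s = s by simpa using h3) (ne_append (by simp))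
  · exact h0

open Classical in
/-- Extraction of the first return to a proper stack suffix. -/
lemma first_return {t D : ℕ} {r : List Γ} (hr : r ≠ [])
    (hdef : ∀ e ≤ D, ∃ n q s, traj A (t + e) = some (n, q, s))
    (h0 : ∃ n q v, v ≠ [] ∧ traj A t = some (n, q, v ++ r))
    (hD : ∀ n q s, traj A (t + D) = some (n, q, s) → ¬∃ v, v ≠ [] ∧ s = v ++ r) :
    ∃ L, 0 < L ∧ L ≤ D ∧ PopTo A t r L := by
  have hex : ∃ e, e ≤ D ∧ ∀ n q s, traj A (t + e) = some (n, q, s) →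
      ¬∃ v, v ≠ [] ∧ s = v ++ r := ⟨D, le_refl _, hD⟩
  classical
  set L := Nat.find hex with hLdef
  obtain ⟨hLD, hLprop⟩ := Nat.find_spec hex
  rw [← hLdef] at hLD hLprop
  have hmin : ∀ e < L, ∃ n q v, v ≠ [] ∧ traj A (t + e) = some (n, q, v ++ r) := by
    intro e he
    have hne := Nat.find_min hex he
    push_neg at hne
    obtain ⟨n, q, s, hs, hv⟩ := hne (by omega)
    obtain ⟨v, hv1, hv2⟩ := hv
    exact ⟨n, q, v, hv1, by rw [← hv2]; exact hs⟩
  have hLpos : 0 < L := by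
    rcases Nat.eq_zero_or_pos L with h00 | h00
    · obtain ⟨n, q, v, hv, he⟩ := h0
      exfalso
      refine hLprop n q (v ++ r) ?_ ⟨v, hv, rfl⟩
      rw [h00, Nat.add_zero]
      exact he
    · exact h00
  refine ⟨L, hLpos, hLD, hmin, ?_⟩
  -- show the stack at time t+L is exactly r
  obtain ⟨n, q, s, hs⟩ := hdef L hLD
  obtain ⟨n0, q0, v0, hv0, he0⟩ := hmin (L - 1) (by omega)
  have hsucc : traj A ((t + (L - 1)) + 1) = some (n, q, s) := by
    rw [show t + (L - 1) + 1 = t + L by omega]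
    exact hs
  obtain ⟨n1, q1, s1, σ, ha, hb, hc⟩ := traj_succ hsucc
  obtain ⟨e1, e2, e3⟩ := traj_inj ha he0
  subst e1; subst e2; subst e3
  cases v0 with
  | nil => exact absurd rfl hv0
  | cons γ' v₁ =>
    have hmv : A.toPrePDA.Move (q1, γ' :: (v₁ ++ r)) σ (q, s) := by
      have := step?_move hb
      rwa [List.cons_append] at this
    have hne2 : v₁ ++ r ≠ [] := by
      intro hcontra
      exact hr (List.append_eq_nil_iff.mp hcontra).2
    obtain ⟨w, hδ, hw, hcond⟩ := move_cases hmv hne2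
    simp only at hw
    by_cases hwv : w ++ v₁ = []
    · obtain ⟨hw1, hw2⟩ := List.append_eq_nil_iff.mp hwv
      subst hw1
      subst hw2
      simp only [List.nil_append] at hw
      refine ⟨n, q, ?_⟩
      rw [show t + L = t + (L - 1) + 1 by omega, hsucc, hw]
    · exfalso
      refine hLprop n q s ?_ ⟨w ++ v₁, hwv, by rw [hw, List.append_assoc]⟩
      rw [show t + L = t + (L - 1) + 1 by omega]
      exact hsucc

/-- `PopOne` is functional: the length of the pop computation of `(q, γ)` is
uniquely determined. -/
lemma popOne_unique {q : Q} {γ : Γ} {L L' : ℕ}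
    (h : PopOne A q γ L) (h' : PopOne A q γ L') : L = L' := by
  obtain ⟨t, n, s, ht, hp⟩ := h
  obtain ⟨t', n', s', ht', hp'⟩ := h'
  -- stacks at the end of pop computations are valid, hence nonempty
  have hs : s ≠ [] := by
    obtain ⟨nf, qf, hf⟩ := hp.2
    exact isStack_ne_nil (traj_isStack _ _ _ _ hf)
  have hs' : s' ≠ [] := by
    obtain ⟨nf, qf, hf⟩ := hp'.2
    exact isStack_ne_nil (traj_isStack _ _ _ _ hf)
  have hLpos : 0 < L := popTo_pos ht hp
  -- we transport the pop computation from t to t', obtaining PopTo A t' s' L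
  have hyp : ∀ e ≤ L - 1, ∀ n0 q0 s0, traj A (t + e) = some (n0, q0, s0) →
      ∃ v, v ≠ [] ∧ s0 = v ++ s := by
    intro e he n0 q0 s0 h0
    obtain ⟨n2, q2, v, hv, he2⟩ := hp.1 e (by omega)
    obtain ⟨-, -, h3⟩ := traj_inj h0 he2
    exact ⟨v, hv, h3⟩
  have hcopy := copy hs hs' ht ht'
  have htrans : PopTo A t' s' L := by
    constructor
    · intro e he
      obtain ⟨n2, q2, v, hv, he2⟩ := hp.1 e he
      have := (hcopy e (fun e' he' => hyp e' (by omega)) he2 hv).2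
      exact ⟨n2 - n + n', q2, v, hv, this⟩
    · -- final move
      obtain ⟨n2, q2, v, hv, he2⟩ := hp.1 (L - 1) (by omega)
      obtain ⟨hle, he2'⟩ := hcopy (L - 1) (fun e' he' => hyp e' he') he2 hv
      obtain ⟨nf, qf, hf⟩ := hp.2
      have hsucc : traj A ((t + (L - 1)) + 1) = some (nf, qf, s) := by
        rw [show t + (L - 1) + 1 = t + L by omega]
        exact hf
      obtain ⟨n1, q1, s1, σ, ha, hb, hc⟩ := traj_succ hsucc
      obtain ⟨e1, e2, e3⟩ := traj_inj ha he2
      subst e1; subst e2; subst e3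
      cases v with
      | nil => exact absurd rfl hv
      | cons γ' v₁ =>
        have hmv : A.toPrePDA.Move (q1, γ' :: (v₁ ++ s)) σ (qf, s) := by
          have := step?_move hb
          rwa [List.cons_append] at this
        have hne2 : v₁ ++ s ≠ [] := fun hcontra => hs (List.append_eq_nil_iff.mp hcontra).2
        obtain ⟨w, hδ, hw, hcond⟩ := move_cases hmv hne2
        simp only at hw
        -- w ++ v₁ = [] by length considerations
        have hwv : w ++ v₁ = [] := by
          have := congrArg List.length hw
          simp at this
          have hw0 : w.length = 0 ∧ v₁.length = 0 := by omega
          rw [List.eq_nil_of_length_eq_zero hw0.1, List.eq_nil_of_length_eq_zero hw0.2]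
          simp
        obtain ⟨hw1, hw2⟩ := List.append_eq_nil_iff.mp hwv
        subst hw1
        subst hw2
        -- transport the final move to the t' side
        have hmv2 : A.toPrePDA.Move (q1, γ' :: s') σ (qf, s') := by
          have := move_of_trans (s := s') hδ hcond
          simpa using this
        have hstk2 : A.toPrePDA.IsStack ([γ'] ++ s') :=
          traj_isStack (A := A) (t' + (L - 1)) _ _ _ he2'
        have hstep2 : step? A (q1, γ' :: s') = some (σ, (qf, s')) :=
          move_step? (by simpa using hstk2) hmv2
        have hfin := traj_step (by simpa using he2') hstep2
        refine ⟨n1 - n + n' + (if σ then 1 else 0), qf, ?_⟩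
        rw [show t' + L = t' + (L - 1) + 1 by omega]
        exact hfin
  exact popTo_unique htrans hp'

variable (A)

/-- The set of `(state, symbol)` pairs admitting a pop computation of length
at most `L`. -/
def popS (L : ℕ) : Set (Q × Γ) := {p | ∃ L', L' ≤ L ∧ PopOne A p.1 p.2 L'}

variable {A}

lemma popS_mono {L L' : ℕ} (h : L ≤ L') : popS A L ⊆ popS A L' := by
  rintro p ⟨L0, hL0, hp⟩
  exact ⟨L0, by omega, hp⟩

lemma popOne_bound : ∀ L (q : Q) (γ : Γ), PopOne A q γ L →
    L ≤ 2 ^ (popS A L).ncard - 1 := by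
  haveI := A.finQ
  haveI := A.finΓ
  intro L
  induction L using Nat.strong_induction_on with
  | _ L ih =>
    intro q γ hP
    have hfin : (popS A L).Finite := Set.toFinite _
    have hmem : (q, γ) ∈ popS A L := ⟨L, le_refl _, hP⟩
    have hc1 : 1 ≤ (popS A L).ncard :=
      (Set.ncard_pos hfin).mpr ⟨(q, γ), hmem⟩
    -- the pop set of any strictly smaller length misses (q, γ)
    have hnotmem : ∀ L', L' < L → (q, γ) ∉ popS A L' := by
      rintro L' hL' ⟨L0, hL0, hp0⟩
      have := popOne_unique hp0 hP
      omega
    have hsub : ∀ L', L' < L → (popS A L').ncard ≤ (popS A L).ncard - 1 := by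
      intro L' hL'
      have h1 : popS A L' ⊆ popS A L \ {(q, γ)} := by
        intro p hp
        exact ⟨popS_mono (by omega) hp, by
          simp only [Set.mem_singleton_iff]
          intro hcontra
          exact hnotmem L' hL' (hcontra ▸ hp)⟩
      calc (popS A L').ncard ≤ (popS A L \ {(q, γ)}).ncard :=
            Set.ncard_le_ncard h1 (hfin.subset Set.diff_subset)
        _ = (popS A L).ncard - 1 := Set.ncard_diff_singleton_of_mem hmem
    obtain ⟨t, n, s, ht, hp⟩ := hP
    have hs : s ≠ [] := by
      obtain ⟨nf, qf, hf⟩ := hp.2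
      exact isStack_ne_nil (traj_isStack _ _ _ _ hf)
    have hLpos : 0 < L := popTo_pos ht hp
    -- the first move
    have ht1 : ∃ n1 q1 s1, traj A (t + 1) = some (n1, q1, s1) := by
      rcases Nat.lt_or_ge 1 L with h1 | h1
      · obtain ⟨n1, q1, v, hv, he⟩ := hp.1 1 h1
        exact ⟨n1, q1, v ++ s, he⟩
      · have : L = 1 := by omega
        obtain ⟨nf, qf, hf⟩ := hp.2
        rw [this] at hf
        exact ⟨nf, qf, s, hf⟩
    obtain ⟨n1, q1, s1, ht1⟩ := ht1
    obtain ⟨n0, q0, s0, σ, ha, hb, hc⟩ := traj_succ ht1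
    obtain ⟨e1, e2, e3⟩ := traj_inj ha ht
    subst e1; subst e2; subst e3
    have hmv := step?_move hb
    obtain ⟨w, hδ, hw, hcond⟩ := move_cases hmv hs
    simp only at hw
    have hwlen : w.length ≤ 2 := (A.wf _ _ _ _ _ hδ).1
    subst hw
    -- case analysis on the pushed word
    rcases w with _ | ⟨γ₁, _ | ⟨γ₂, w''⟩⟩
    ·
      -- L = 1
      have hL1 : L = 1 := by
        by_contra hL1
        obtain ⟨n2, q2, v, hv, he2⟩ := hp.1 1 (by omega)
        obtain ⟨-, -, h3⟩ := traj_inj ht1 he2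
        simp only [List.nil_append] at h3
        exact ne_append hv h3.symm
      have : (2:ℕ) ≤ 2 ^ (popS A L).ncard :=
        le_trans (by norm_num) (Nat.pow_le_pow_right (by norm_num) hc1)
      omega
    ·
      -- pop computation of (q1, γ₁) of length L - 1
      have hpop1 : PopOne A q1 γ₁ (L - 1) := by
        refine ⟨t + 1, n1, s, by simpa using ht1, ?_, ?_⟩
        · intro e he
          obtain ⟨n2, q2, v, hv, he2⟩ := hp.1 (1 + e) (by omega)
          rw [show t + (1 + e) = t + 1 + e by omega] at he2
          exact ⟨n2, q2, v, hv, he2⟩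
        · obtain ⟨nf, qf, hf⟩ := hp.2
          rw [show t + L = t + 1 + (L - 1) by omega] at hf
          exact ⟨nf, qf, hf⟩
      have hb1 := ih (L - 1) (by omega) _ _ hpop1
      have hb2 := hsub (L - 1) (by omega)
      have hb3 : 2 ^ (popS A (L - 1)).ncard ≤ 2 ^ ((popS A L).ncard - 1) :=
        Nat.pow_le_pow_right (by norm_num) (by omega)
      have hb4 : 2 ^ ((popS A L).ncard - 1) * 2 = 2 ^ (popS A L).ncard := by
        rw [← Nat.pow_succ]
        congr 1
        omega
      have hb5 : 1 ≤ 2 ^ ((popS A L).ncard - 1) := Nat.one_le_two_pow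
      omega
    · have hw'' : w'' = [] := by
        simp only [List.length_cons] at hwlen
        exact List.eq_nil_of_length_eq_zero (by omega)
      subst hw'' 
      -- first pop γ₁ (length L₁), then pop γ₂ (length L - 1 - L₁)
      have hfr := first_return (A := A) (t := t + 1) (D := L - 1) (r := γ₂ :: s)
        (by simp)
        (by
          intro e he
          rcases Nat.lt_or_ge (1 + e) L with h1 | h1
          · obtain ⟨n2, q2, v, hv, he2⟩ := hp.1 (1 + e) h1
            rw [show t + (1 + e) = t + 1 + e by omega] at he2
            exact ⟨n2, q2, v ++ s, he2⟩
          · have he1 : 1 + e = L := by omega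
            obtain ⟨nf, qf, hf⟩ := hp.2
            rw [show t + L = t + 1 + e by omega] at hf
            exact ⟨nf, qf, s, hf⟩)
        (⟨n1, q1, [γ₁], by simp, by simpa using ht1⟩)
        (by
          intro n2 q2 s2 h2 hcontra
          obtain ⟨nf, qf, hf⟩ := hp.2
          rw [show t + 1 + (L - 1) = t + L by omega] at h2
          obtain ⟨-, -, h3⟩ := traj_inj h2 hf
          obtain ⟨v, hv, hv2⟩ := hcontra
          rw [h3] at hv2
          have := congrArg List.length hv2
          simp at this
          omega)
      obtain ⟨L₁, hL₁pos, hL₁le, hpt1⟩ := hfr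
      have hpop1 : PopOne A q1 γ₁ L₁ := ⟨t + 1, n1, γ₂ :: s, by simpa using ht1, hpt1⟩
      obtain ⟨n2, q2, h2⟩ := hpt1.2
      have hpop2 : PopOne A q2 γ₂ (L - 1 - L₁) := by
        refine ⟨t + 1 + L₁, n2, s, h2, ?_, ?_⟩
        · intro e he
          obtain ⟨n3, q3, v, hv, he3⟩ := hp.1 (1 + L₁ + e) (by omega)
          rw [show t + (1 + L₁ + e) = t + 1 + L₁ + e by omega] at he3
          exact ⟨n3, q3, v, hv, he3⟩
        · obtain ⟨nf, qf, hf⟩ := hp.2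
          rw [show t + L = t + 1 + L₁ + (L - 1 - L₁) by omega] at hf
          exact ⟨nf, qf, hf⟩
      have hb1 := ih L₁ (by omega) _ _ hpop1
      have hb1' := ih (L - 1 - L₁) (by omega) _ _ hpop2
      have hc2 := hsub L₁ (by omega)
      have hc3 := hsub (L - 1 - L₁) (by omega)
      have hb3 : 2 ^ (popS A L₁).ncard ≤ 2 ^ ((popS A L).ncard - 1) :=
        Nat.pow_le_pow_right (by norm_num) (by omega)
      have hb3' : 2 ^ (popS A (L - 1 - L₁)).ncard ≤ 2 ^ ((popS A L).ncard - 1) :=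
        Nat.pow_le_pow_right (by norm_num) (by omega)
      have hb4 : 2 ^ ((popS A L).ncard - 1) * 2 = 2 ^ (popS A L).ncard := by
        rw [← Nat.pow_succ]
        congr 1
        omega
      have hb5 : 1 ≤ 2 ^ ((popS A L).ncard - 1) := Nat.one_le_two_pow
      omega

/-- The final pop bound: any pop computation takes at most `2 ^ size` steps. -/
lemma popOne_bound_final {L : ℕ} {q : Q} {γ : Γ} (h : PopOne A q γ L) :
    L ≤ 2 ^ A.size - 1 := by
  haveI := A.finQ
  haveI := A.finΓ
  have h1 := popOne_bound L q γ h
  have h2 : (popS A L).ncard ≤ A.size := by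
    have h3 : (popS A L).ncard ≤ (Set.univ : Set (Q × Γ)).ncard :=
      Set.ncard_le_ncard (Set.subset_univ _) Set.finite_univ
    rw [Set.ncard_univ, Nat.card_prod] at h3
    exact h3
  have h4 : 2 ^ (popS A L).ncard ≤ 2 ^ A.size := Nat.pow_le_pow_right (by norm_num) h2
  omega

end Pop

end UPDAProof
namespace UPDAProof

section Global

variable {Q Γ : Type} {A : UDPDA Q Γ}

variable (A)

/-- From time `t` on, the stack always strictly extends `r`. -/
def Above (t : ℕ) (r : List Γ) : Prop :=
  ∀ d n q s, traj A (t + d) = some (n, q, s) → ∃ v, v ≠ [] ∧ s = v ++ r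

/-- `t` is a future-minimum time: the stack never goes below its current level. -/
def FMTime (t : ℕ) : Prop :=
  ∃ n q γ r, traj A t = some (n, q, γ :: r) ∧ Above A t r

variable {A}

lemma above_shift {t : ℕ} {r : List Γ} (h : Above A t r) (d : ℕ) :
    Above A (t + d) r := by
  intro d' n q s hs
  exact h (d + d') n q s (by rw [← Nat.add_assoc]; exact hs)

lemma fm_zero : FMTime A 0 := by
  refine ⟨0, A.init, A.bot, [], traj_zero A, ?_⟩
  intro d n q s hs
  refine ⟨s, isStack_ne_nil (traj_isStack _ _ _ _ hs), by simp⟩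

lemma move_stack_shape {q : Q} {γ : Γ} {r : List Γ} {σ : Bool} {c' : Q × List Γ}
    (hm : A.toPrePDA.Move (q, γ :: r) σ c') :
    c'.2 = γ :: r ∨ ∃ w, c'.2 = w ++ r ∧ w.length ≤ 2 := by
  obtain ⟨γ0, w, hδ, hbr⟩ := hm
  rcases hbr with ⟨hcond, s', he1, he2⟩ | ⟨-, -, he1, he2⟩
  · simp only at he1 he2
    injection he1 with h1 h2
    subst h1
    subst h2
    exact Or.inr ⟨w, he2, (A.wf _ _ _ _ _ hδ).1⟩
  · simp only at he1 he2
    rw [he2, he1]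
    exact Or.inl rfl

/-- From any future-minimum time whose successor is defined, there is another
future-minimum time within `2 ^ size` steps. -/
lemma fm_succ {t : ℕ} (hP : FMTime A t) (hdef : ∃ x, traj A (t + 1) = some x) :
    ∃ t', t < t' ∧ t' ≤ t + 2 ^ A.size ∧ FMTime A t' := by
  have hpow : 1 ≤ 2 ^ A.size := Nat.one_le_two_pow
  obtain ⟨n, q, γ, r, ht, hAb⟩ := hP
  obtain ⟨⟨n1, q1, s1⟩, hx⟩ := hdef
  obtain ⟨n0, q0, s0, σ, ha, hb, hc⟩ := traj_succ hx
  obtain ⟨e1, e2, e3⟩ := traj_inj ha ht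
  subst e1; subst e2; subst e3
  have hmv := step?_move hb
  rcases move_stack_shape hmv with hsh | ⟨w, hsh, hwlen⟩
  · -- the stack is unchanged
    simp only at hsh
    subst hsh
    exact ⟨t + 1, by omega, by omega, ⟨n1, q1, γ, r, hx, above_shift hAb 1⟩⟩
  · simp only at hsh
    subst hsh
    rcases w with _ | ⟨x, _ | ⟨y, w''⟩⟩
    · -- w = [] : contradicts Above at d = 1
      obtain ⟨v, hv, he⟩ := hAb 1 _ _ _ hx
      simp only [List.nil_append] at he
      exact absurd he.symm (ne_append hv)
    · -- w = [x]
      exact ⟨t + 1, by omega, by omega, ⟨n1, q1, x, r, by simpa using hx, above_shift hAb 1⟩⟩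
    · -- w = [x, y]
      have hw'' : w'' = [] := by
        simp only [List.length_cons] at hwlen
        exact List.eq_nil_of_length_eq_zero (by omega)
      subst hw''
      by_cases hA : Above A (t + 1) (y :: r)
      · exact ⟨t + 1, by omega, by omega,
          ⟨n1, q1, x, y :: r, by simpa using hx, hA⟩⟩
      · unfold Above at hA
        push_neg at hA
        obtain ⟨d, n', q', s', hs', hnod⟩ := hA
        have hfr := first_return (A := A) (t := t + 1) (D := d) (r := y :: r)
          (by simp)
          (by
            intro e he
            have : traj A (t + 1 + d) = some (n', q', s') := hs'
            rw [show t + 1 + d = (t + 1 + e) + (d - e) by omega] at this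
            obtain ⟨⟨n2, q2, s2⟩, h2⟩ := traj_defined_add this
            exact ⟨n2, q2, s2, h2⟩)
          (⟨n1, q1, [x], by simp, by simpa using hx⟩)
          (by
            intro n2 q2 s2 h2 hcontra
            obtain ⟨e1, e2, e3⟩ := traj_inj h2 hs'
            subst e3
            obtain ⟨v, hv1, hv2⟩ := hcontra
            exact absurd hv2 (hnod v hv1))
        obtain ⟨L, hLpos, hLle, hpt⟩ := hfr
        have hpop : PopOne A q1 x L := ⟨t + 1, n1, y :: r, by simpa using hx, hpt⟩
        have hLbd : L ≤ 2 ^ A.size - 1 := popOne_bound_final hpop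
        obtain ⟨n2, q2, h2⟩ := hpt.2
        refine ⟨t + 1 + L, by omega, by omega, ⟨n2, q2, y, r, h2, ?_⟩⟩
        have := above_shift hAb (1 + L)
        rwa [← Nat.add_assoc] at this

/-- Transporting the future of a future-minimum time `t₁` to a later time `t₂`
with the same state and top-of-stack. -/
lemma fm_shift {t₁ t₂ n₁ n₂ : ℕ} {q : Q} {γ : Γ} {r₁ r₂ : List Γ}
    (h₁ : traj A t₁ = some (n₁, q, γ :: r₁)) (hAb₁ : Above A t₁ r₁)
    (h₂ : traj A t₂ = some (n₂, q, γ :: r₂)) :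
    ∀ d {n' : ℕ} {q' : Q} {s' : List Γ}, traj A (t₁ + d) = some (n', q', s') →
      n₁ ≤ n' ∧ ∃ s'', traj A (t₂ + d) = some (n' - n₁ + n₂, q', s'') := by
  intro d n' q' s' hd
  by_cases hr₁ : r₁ = []
  · -- then γ = bot and r₂ = [] as well, so the configurations coincide
    subst hr₁
    have hst₁ := traj_isStack (A := A) t₁ _ _ _ h₁
    have hγ : γ = A.bot := by
      rcases isStack_cons_elim hst₁ with ⟨h, -⟩ | ⟨-, -, h⟩
      · exact h
      · exact absurd rfl h
    have hst₂ := traj_isStack (A := A) t₂ _ _ _ h₂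
    have hr₂ : r₂ = [] := by
      rcases isStack_cons_elim hst₂ with ⟨-, h⟩ | ⟨h, -, -⟩
      · exact h
      · exact absurd hγ h
    subst hr₂
    obtain ⟨hle, hcp⟩ := copy_eq h₁ h₂ d hd
    exact ⟨hle, s', hcp⟩
  · have hr₂ : r₂ ≠ [] := by
      intro hr₂
      subst hr₂
      have hst₂ := traj_isStack (A := A) t₂ _ _ _ h₂
      have hγ : γ = A.bot := by
        rcases isStack_cons_elim hst₂ with ⟨h, -⟩ | ⟨-, -, h⟩
        · exact h
        · exact absurd rfl h
      have hst₁ := traj_isStack (A := A) t₁ _ _ _ h₁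
      rcases isStack_cons_elim hst₁ with ⟨-, h⟩ | ⟨h, -, -⟩
      · exact hr₁ h
      · exact h hγ
    obtain ⟨v, hv, rfl⟩ := hAb₁ d _ _ _ hd
    have hyp : ∀ e ≤ d, ∀ n0 q0 s0, traj A (t₁ + e) = some (n0, q0, s0) →
        ∃ v0, v0 ≠ [] ∧ s0 = v0 ++ r₁ := fun e he n0 q0 s0 h0 => hAb₁ e n0 q0 s0 h0
    obtain ⟨hle, hcp⟩ := copy hr₁ hr₂ h₁ h₂ d hyp hd hv
    exact ⟨hle, v ++ r₂, hcp⟩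

/-- Building a chain of future-minimum times. -/
lemma chain_exists (P : ℕ → Prop) (B K : ℕ) (h0 : P 0)
    (hsucc : ∀ t, t ≤ K * B → P t → ∃ t', t < t' ∧ t' ≤ t + B ∧ P t') :
    ∃ f : ℕ → ℕ, (∀ i ≤ K, P (f i) ∧ f i ≤ i * B) ∧ (∀ i < K, f i < f (i + 1)) := by
  suffices h : ∀ k ≤ K, ∃ f : ℕ → ℕ,
      (∀ i ≤ k, P (f i) ∧ f i ≤ i * B) ∧ (∀ i < k, f i < f (i + 1)) by
    exact h K (le_refl _)
  intro k
  induction k with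
  | zero =>
    intro _
    refine ⟨fun _ => 0, ?_, ?_⟩
    · intro i hi
      rw [Nat.le_zero] at hi
      subst hi
      exact ⟨h0, by simp⟩
    · intro i hi
      exact absurd hi (by omega)
  | succ k ih =>
    intro hk
    obtain ⟨f, hf1, hf2⟩ := ih (by omega)
    obtain ⟨hPk, hbk⟩ := hf1 k (le_refl _)
    obtain ⟨t', ht1, ht2, ht3⟩ := hsucc (f k) (by
      calc f k ≤ k * B := hbk
        _ ≤ K * B := Nat.mul_le_mul_right _ (by omega)) hPk
    refine ⟨fun i => if i ≤ k then f i else t', ?_, ?_⟩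
    · intro i hi
      by_cases hik : i ≤ k
      · simp only [if_pos hik]
        exact hf1 i hik
      · simp only [if_neg hik]
        have : i = k + 1 := by omega
        subst this
        refine ⟨ht3, ?_⟩
        calc t' ≤ f k + B := ht2
          _ ≤ k * B + B := by omega
          _ = (k + 1) * B := by ring
    · intro i hi
      by_cases hik : i < k
      · simp only [if_pos (show i ≤ k by omega), if_pos (show i + 1 ≤ k by omega)]
        exact hf2 i hik
      · have : i = k := by omega
        subst this
        simp only [if_pos (le_refl _), if_neg (show ¬ i + 1 ≤ i by omega)]
        exact ht1

lemma chain_strictmono {f : ℕ → ℕ} {K : ℕ} (h : ∀ i < K, f i < f (i + 1)) :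
    ∀ j ≤ K, ∀ i < j, f i < f j := by
  intro j
  induction j with
  | zero => intro _ i hi; omega
  | succ j ih =>
    intro hj i hi
    rcases Nat.lt_or_ge i j with h1 | h1
    · exact lt_trans (ih (by omega) i h1) (h j (by omega))
    · have : i = j := by omega
      subst this
      exact h i (by omega)

/-- Two future-minimum times with the same state and top symbol. -/
lemma fm_repeat
    (hsucc : ∀ t, t ≤ A.size * 2 ^ A.size → FMTime A t →
      ∃ t', t < t' ∧ t' ≤ t + 2 ^ A.size ∧ FMTime A t') :
    ∃ (t₁ t₂ : ℕ) (q : Q) (γ : Γ), t₁ < t₂ ∧ t₂ ≤ A.size * 2 ^ A.size ∧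
      (∃ n r, traj A t₁ = some (n, q, γ :: r) ∧ Above A t₁ r) ∧
      (∃ n r, traj A t₂ = some (n, q, γ :: r) ∧ Above A t₂ r) := by
  haveI := A.finQ
  haveI := A.finΓ
  haveI : Fintype Q := Fintype.ofFinite Q
  haveI : Fintype Γ := Fintype.ofFinite Γ
  obtain ⟨f, hf1, hf2⟩ := chain_exists (FMTime A) (2 ^ A.size) A.size fm_zero hsucc
  have hfP : ∀ i : Fin (A.size + 1), FMTime A (f i) := fun i => (hf1 i (by omega)).1
  classical
  let g : Fin (A.size + 1) → Q × Γ := fun i =>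
    ((hfP i).choose_spec.choose, (hfP i).choose_spec.choose_spec.choose)
  have hcard : Fintype.card (Q × Γ) < Fintype.card (Fin (A.size + 1)) := by
    rw [Fintype.card_fin, Fintype.card_prod]
    have h1 : A.size = Fintype.card Q * Fintype.card Γ := by
      unfold UDPDA.size
      rw [Nat.card_eq_fintype_card, Nat.card_eq_fintype_card]
    omega
  obtain ⟨i, j, hij, hg⟩ := Fintype.exists_ne_map_eq_of_card_lt g hcard
  -- order them
  rcases Nat.lt_or_ge (i : ℕ) (j : ℕ) with hlt | hge
  · refine ⟨f i, f j, (g i).1, (g i).2,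
      chain_strictmono hf2 j (by omega) i hlt,
      le_trans (hf1 j (by omega)).2 (Nat.mul_le_mul_right _ (by omega)), ?_, ?_⟩
    · obtain ⟨r, hr1, hr2⟩ := (hfP i).choose_spec.choose_spec.choose_spec
      exact ⟨(hfP i).choose, r, hr1, hr2⟩
    · obtain ⟨r, hr1, hr2⟩ := (hfP j).choose_spec.choose_spec.choose_spec
      rw [hg]
      exact ⟨(hfP j).choose, r, hr1, hr2⟩
  · have hlt : (j : ℕ) < (i : ℕ) := by
      rcases Nat.lt_or_ge (j : ℕ) (i : ℕ) with h | h
      · exact h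
      · exact absurd (Fin.ext (by omega)) hij
    refine ⟨f j, f i, (g i).1, (g i).2,
      chain_strictmono hf2 i (by omega) j hlt,
      le_trans (hf1 i (by omega)).2 (Nat.mul_le_mul_right _ (by omega)), ?_, ?_⟩
    · obtain ⟨r, hr1, hr2⟩ := (hfP j).choose_spec.choose_spec.choose_spec
      rw [hg]
      exact ⟨(hfP j).choose, r, hr1, hr2⟩
    · obtain ⟨r, hr1, hr2⟩ := (hfP i).choose_spec.choose_spec.choose_spec
      exact ⟨(hfP i).choose, r, hr1, hr2⟩

end Global

end UPDAProof
namespace UPDAProof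

section Main

variable {Q Γ : Type} {A : UDPDA Q Γ}

lemma periodic_infinite (hinf : ∀ t, ∃ x, traj A t = some x) :
    ∃ N p, 1 ≤ p ∧ N + p ≤ 2 * (A.size * 2 ^ A.size) + 2 ∧
      ∀ n, N ≤ n → (n ∈ A.lang ↔ n + p ∈ A.lang) := by
  obtain ⟨t₁, t₂, q, γ, hlt, hbd, ⟨n₁, r₁, h₁, hAb₁⟩, ⟨n₂, r₂, h₂, hAb₂⟩⟩ :=
    fm_repeat (A := A) (fun t _ hP => fm_succ hP (hinf (t + 1)))
  have hshift := fm_shift h₁ hAb₁ h₂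
  have hn12 : n₁ ≤ n₂ := by
    have := traj_mono h₁ (show traj A (t₁ + (t₂ - t₁)) = some (n₂, q, γ :: r₂) by
      rw [show t₁ + (t₂ - t₁) = t₂ by omega]; exact h₂)
    exact this.1
  have hn₂bd : n₂ ≤ A.size * 2 ^ A.size := le_trans (traj_cnt_le h₂) hbd
  by_cases hp : n₁ = n₂
  · -- the counter never exceeds n₂ : the language is bounded
    have hbound : ∀ t n (q0 : Q) (s0 : List Γ), traj A t = some (n, q0, s0) → n ≤ n₂ := by
      intro t
      induction t using Nat.strong_induction_on with
      | _ t ih =>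
        intro n q0 s0 htr
        rcases Nat.lt_or_ge t₂ t with hgt | hle
        · obtain ⟨x, hx⟩ := hinf (t₁ + (t - t₂))
          obtain ⟨m', qq, ss⟩ := x
          obtain ⟨hge, s'', h''⟩ := hshift (t - t₂) hx
          rw [show t₂ + (t - t₂) = t by omega] at h''
          obtain ⟨e1, e2, -⟩ := traj_inj htr h''
          have := ih (t₁ + (t - t₂)) (by omega) _ _ _ hx
          omega
        · have := traj_mono htr (show traj A (t + (t₂ - t)) = some (n₂, q, γ :: r₂) by
            rw [show t + (t₂ - t) = t₂ by omega]; exact h₂)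
          exact this.1
    have habs : ∀ m, n₂ < m → m ∉ A.lang := by
      intro m hm hmem
      obtain ⟨t, n', q', s', htr, heq, -⟩ := mem_lang_iff.mp hmem
      have := hbound t n' q' s' htr
      omega
    exact ⟨n₂ + 1, 1, le_refl _, by omega, fun n hn =>
      iff_of_false (habs n (by omega)) (habs (n + 1) (by omega))⟩
  · -- genuine period p = n₂ - n₁ ≥ 1
    refine ⟨n₂, n₂ - n₁, by omega, by omega, ?_⟩
    intro n hn
    constructor
    · intro hmem
      obtain ⟨t, n', q', s', htr, heq, hfin⟩ := mem_lang_iff.mp hmem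
      have ht₁t : t₁ < t := by
        by_contra hcon
        push_neg at hcon
        have := traj_mono htr (show traj A (t + (t₁ - t)) = some (n₁, q, γ :: r₁) by
          rw [show t + (t₁ - t) = t₁ by omega]; exact h₁)
        omega
      obtain ⟨hge, s'', h''⟩ := hshift (t - t₁)
        (by rw [show t₁ + (t - t₁) = t by omega]; exact htr)
      rw [mem_lang_iff]
      exact ⟨t₂ + (t - t₁), n' - n₁ + n₂, q', s'', h'', by omega, hfin⟩
    · intro hmem
      obtain ⟨t, n', q', s', htr, heq, hfin⟩ := mem_lang_iff.mp hmem
      have ht₂t : t₂ < t := by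
        by_contra hcon
        push_neg at hcon
        have := traj_mono htr (show traj A (t + (t₂ - t)) = some (n₂, q, γ :: r₂) by
          rw [show t + (t₂ - t) = t₂ by omega]; exact h₂)
        omega
      obtain ⟨x, hx⟩ := hinf (t₁ + (t - t₂))
      obtain ⟨m', qq, ss⟩ := x
      obtain ⟨hge, s'', h''⟩ := hshift (t - t₂) hx
      rw [show t₂ + (t - t₂) = t by omega] at h''
      obtain ⟨e1, e2, -⟩ := traj_inj htr h''
      rw [mem_lang_iff]
      exact ⟨t₁ + (t - t₂), m', qq, ss, hx, by omega, e2 ▸ hfin⟩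

lemma periodic_finite {T : ℕ} (hTsome : ∃ x, traj A T = some x)
    (hTnone : traj A (T + 1) = none) :
    ∃ N p, 1 ≤ p ∧ N + p ≤ 2 * (A.size * 2 ^ A.size) + 2 ∧
      ∀ n, N ≤ n → (n ∈ A.lang ↔ n + p ∈ A.lang) := by
  have hle : ∀ t n (q0 : Q) (s0 : List Γ), traj A t = some (n, q0, s0) → t ≤ T := by
    intro t n q0 s0 htr
    by_contra h
    push_neg at h
    obtain ⟨y, hy⟩ := traj_defined_add (t := T + 1) (d := t - T - 1)
      (by rw [show T + 1 + (t - T - 1) = t by omega]; exact htr)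
    rw [hTnone] at hy
    cases hy
  have hTbd : T ≤ A.size * 2 ^ A.size := by
    by_contra hbig
    push_neg at hbig
    have hsucc : ∀ t, t ≤ A.size * 2 ^ A.size → FMTime A t →
        ∃ t', t < t' ∧ t' ≤ t + 2 ^ A.size ∧ FMTime A t' := by
      intro t htle hP
      refine fm_succ hP ?_
      obtain ⟨x, hx⟩ := hTsome
      refine traj_defined_add (t := t + 1) (d := T - (t + 1)) (x := x) ?_
      rw [show t + 1 + (T - (t + 1)) = T by omega]
      exact hx
    obtain ⟨t₁, t₂, q, γ, hlt, hbd, ⟨n₁, r₁, h₁, hAb₁⟩, ⟨n₂, r₂, h₂, hAb₂⟩⟩ :=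
      fm_repeat (A := A) hsucc
    obtain ⟨x, hx⟩ := hTsome
    obtain ⟨nT, qT, sT⟩ := x
    have hd : traj A (t₁ + (T - t₁)) = some (nT, qT, sT) := by
      rw [show t₁ + (T - t₁) = T by omega]
      exact hx
    obtain ⟨-, s'', h''⟩ := fm_shift h₁ hAb₁ h₂ (T - t₁) hd
    have := hle _ _ _ _ h''
    omega
  have habs : ∀ m, T < m → m ∉ A.lang := by
    intro m hm hmem
    obtain ⟨t, n', q', s', htr, heq, -⟩ := mem_lang_iff.mp hmem
    have h1 := traj_cnt_le htr
    have h2 := hle _ _ _ _ htr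
    omega
  exact ⟨T + 1, 1, le_refl _, by omega, fun n hn =>
    iff_of_false (habs n (by omega)) (habs (n + 1) (by omega))⟩

lemma periodic_main (A : UDPDA Q Γ) :
    ∃ N p, 1 ≤ p ∧ N + p ≤ 2 * (A.size * 2 ^ A.size) + 2 ∧
      ∀ n, N ≤ n → (n ∈ A.lang ↔ n + p ∈ A.lang) := by
  classical
  by_cases hinf : ∀ t, ∃ x, traj A t = some x
  · exact periodic_infinite hinf
  · push_neg at hinf
    obtain ⟨t0, ht0⟩ := hinf
    have hnone : ∃ t, traj A t = none := by
      refine ⟨t0, ?_⟩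
      cases h : traj A t0 with
      | none => rfl
      | some x => exact absurd h (ht0 x)
    have hF := Nat.find_spec hnone
    have hFpos : 0 < Nat.find hnone := by
      rcases Nat.eq_zero_or_pos (Nat.find hnone) with h | h
      · rw [h, traj_zero] at hF
        cases hF
      · exact h
    have hTsome : ∃ x, traj A (Nat.find hnone - 1) = some x := by
      cases h : traj A (Nat.find hnone - 1) with
      | none => exact absurd h (Nat.find_min hnone (by omega))
      | some x => exact ⟨x, rfl⟩
    have hTnone : traj A ((Nat.find hnone - 1) + 1) = none := by
      rw [show (Nat.find hnone - 1) + 1 = Nat.find hnone by omega]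
      exact hF
    exact periodic_finite hTsome hTnone

end Main

end UPDAProof

/-- There is an absolute constant `C` such that for every
udpda `A` of size `m`, the language `L(A)` is accepted by a deterministic
finite automaton with at most `2^{C·m}` states. -/
theorem udpda_to_dfa :
    ∃ C : ℕ, ∀ (Q Γ : Type) (A : UDPDA Q Γ),
      ∃ (σ : Type) (_ : Finite σ) (M : DFA Unit σ),
        Nat.card σ ≤ 2 ^ (C * A.size) ∧
        ∀ n : ℕ, List.replicate n () ∈ M.accepts ↔ n ∈ A.lang := by
  refine ⟨4, fun Q Γ A => ?_⟩
  obtain ⟨N, p, hp, hbd, hper⟩ := UPDAProof.periodic_main A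
  obtain ⟨M, hM⟩ := UPDAProof.dfa_of_periodic A.lang hp hper
  refine ⟨Fin (N + p), Finite.of_fintype _, M, ?_, hM⟩
  rw [Nat.card_eq_fintype_card, Fintype.card_fin]
  -- arithmetic: N + p ≤ 2 ^ (4 * size)
  have hsz : 1 ≤ A.size := by
    haveI := A.finQ
    haveI := A.finΓ
    haveI : Nonempty Q := ⟨A.init⟩
    haveI : Nonempty Γ := ⟨A.bot⟩
    have h1 : 0 < Nat.card Q := Nat.card_pos
    have h2 : 0 < Nat.card Γ := Nat.card_pos
    exact Nat.mul_pos h1 h2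
  have h1 : A.size < 2 ^ A.size := Nat.lt_two_pow_self
  have e1 : A.size * 2 ^ A.size ≤ 2 ^ A.size * 2 ^ A.size :=
    Nat.mul_le_mul_right _ (le_of_lt h1)
  have e2 : (2 : ℕ) ^ A.size * 2 ^ A.size = 2 ^ (A.size + A.size) := (pow_add 2 _ _).symm
  have e3 : 2 ^ (A.size + A.size + 2) = 2 ^ (A.size + A.size) * 4 := by
    rw [pow_add]
    norm_num
  have hone : 1 ≤ 2 ^ (A.size + A.size) := Nat.one_le_two_pow
  have e4 : 2 ^ (A.size + A.size + 2) ≤ 2 ^ (4 * A.size) :=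
    Nat.pow_le_pow_right (by norm_num) (by omega)
  -- combine
  have step0 : 2 * (A.size * 2 ^ A.size) + 2 ≤ 2 * (2 ^ A.size * 2 ^ A.size) + 2 :=
    Nat.add_le_add_right (Nat.mul_le_mul_left 2 e1) 2
  have step1 : N + p ≤ 2 * 2 ^ (A.size + A.size) + 2 := by
    rw [← e2]
    exact le_trans hbd step0
  omega
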